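/- Let T be a plane binary tree with p ≥ 1 internal nodes, whose leaves are numbered 0, 1, …, p from left to right. Let SG(T, i) denote the tree obtained by splicing T at leaf i into a left part T₁ and a right part T₂ and grafting them as T₁ ∨ T₂, and let T* denote the tree obtained from T by removing the leftmost leaf and erasing its parent node. Then: (i) for every i with 1 ≤ i ≤ p, (SG(T, i))* = SG(T*, i-1); and (ii) (SG(T, 0))* = T. -/
import Mathlib


/-- A plane binary tree: either the empty tree `∅` (a single leaf attached to the root,
no internal nodes), or the graft `T₁ ∨ T₂` of two plane binary trees (joined at a new
internal node attached to a new root). -/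
inductive PBT : Type
  | empty : PBT
  | graft : PBT → PBT → PBT
deriving DecidableEq

namespace PBT

/-- The number of internal nodes of a plane binary tree. -/
def size : PBT → ℕ
  | empty => 0
  | graft l r => size l + size r + 1

/-- Splicing a plane binary tree `T` at its `i`-th leaf (leaves are numbered
`0, 1, …, size T` from left to right): following the path from leaf `i` to the root,
the edges weakly to the left form the first tree (with `i` internal nodes) and the edges
weakly to the right form the second tree (with `size T - i` internal nodes). -/
def splice : PBT → ℕ → PBT × PBT
  | empty, _ => (empty, empty)
  | graft l r, i =>
      if i ≤ size l then ((splice l i).1, graft (splice l i).2 r)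
      else (graft l (splice r (i - size l - 1)).1, (splice r (i - size l - 1)).2)

/-- `SG(T, i)`: splice `T` at leaf `i` into `(T₁, T₂)` and graft, giving `T₁ ∨ T₂`. -/
def SG (T : PBT) (i : ℕ) : PBT :=
  graft (splice T i).1 (splice T i).2

/-- `T*`: the tree obtained from `T` by removing the leftmost leaf and erasing its
parent internal node: `(∅ ∨ T₂)* = T₂` and `(T₁ ∨ T₂)* = T₁* ∨ T₂` for `T₁ ≠ ∅`. -/
def star : PBT → PBT
  | empty => empty
  | graft empty r => r
  | graft (graft a b) r => graft (star (graft a b)) r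

end PBT

namespace PBT

lemma splice_zero (T : PBT) : T.splice 0 = (PBT.empty, T) := by
  induction T with
  | empty => rfl
  | graft l r ihl ihr => simp [PBT.splice, ihl]

lemma ne_empty_of_size (T : PBT) (h : T.size ≠ 0) : T ≠ PBT.empty := by
  cases T with
  | empty => simp [PBT.size] at h
  | graft a b => simp

lemma star_graft_ne (a b : PBT) (h : a ≠ PBT.empty) :
    (PBT.graft a b).star = PBT.graft a.star b := by
  cases a with
  | empty => simp at h
  | graft x y => rfl

lemma size_star (T : PBT) (h : T ≠ PBT.empty) : T.star.size + 1 = T.size := by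
  induction T with
  | empty => simp at h
  | graft l r ihl ihr =>
    cases l with
    | empty => simp [PBT.star, PBT.size]
    | graft a b =>
      have h2 := ihl (by simp)
      rw [star_graft_ne _ _ (by simp)]
      simp [PBT.size] at h2 ⊢
      omega

lemma splice_fst_size (T : PBT) (i : ℕ) (h : i ≤ T.size) :
    (T.splice i).1.size = i := by
  induction T generalizing i with
  | empty => simp [PBT.size] at h; simp [h, PBT.splice, PBT.size]
  | graft l r ihl ihr =>
    by_cases hi : i ≤ l.size
    · simp [PBT.splice, hi, ihl i hi]
    · have hj : i - l.size - 1 ≤ r.size := by simp [PBT.size] at h; omega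
      simp [PBT.splice, hi, PBT.size, ihr _ hj]
      omega

lemma splice_graft (l r : PBT) (i : ℕ) :
    (PBT.graft l r).splice i =
      if i ≤ l.size then ((l.splice i).1, PBT.graft (l.splice i).2 r)
      else (PBT.graft l (r.splice (i - l.size - 1)).1, (r.splice (i - l.size - 1)).2) := rfl

lemma star_SG (T : PBT) (i : ℕ) (h1 : 1 ≤ i) (h2 : i ≤ T.size) :
    (T.SG i).star = T.star.SG (i - 1) := by
  induction T generalizing i with
  | empty => simp [PBT.size] at h2; omega
  | graft l r ihl ihr =>
    by_cases hle : l = PBT.empty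
    · subst hle
      have hi0 : i ≠ 0 := by omega
      simp only [PBT.SG, PBT.splice, PBT.size, hi0, Nat.le_zero, if_false, Nat.sub_zero]
      rw [star_graft_ne _ _ (by simp)]
      simp [PBT.star]
    · have hsz := size_star l hle
      have hsz0 : l.size ≠ 0 := by
        cases l with
        | empty => exact absurd rfl hle
        | graft a b => simp [PBT.size]
      by_cases hi : i ≤ l.size
      · have key := ihl i h1 hi
        have hAne : (l.splice i).1 ≠ PBT.empty :=
          ne_empty_of_size _ (by rw [splice_fst_size l i hi]; omega)
        rw [PBT.SG, PBT.SG, star_graft_ne _ _ hAne] at key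
        obtain ⟨e1, e2⟩ := PBT.graft.inj key
        have hi' : i - 1 ≤ l.star.size := by omega
        rw [PBT.SG, PBT.SG, star_graft_ne _ _ hle,
          splice_graft, if_pos hi, splice_graft, if_pos hi']
        simp only
        rw [star_graft_ne _ _ hAne, e1, e2]
      · have hj : ¬ (i - 1 ≤ l.star.size) := by omega
        have hidx : i - 1 - l.star.size - 1 = i - l.size - 1 := by omega
        rw [PBT.SG, PBT.SG, star_graft_ne _ _ hle,
          splice_graft, if_neg hi, splice_graft, if_neg hj]
        simp only [hidx]
        rw [star_graft_ne _ _ (by simp)]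
        rw [star_graft_ne _ _ hle]

end PBT


/-- Let `T` be a plane binary tree with `p ≥ 1` internal nodes.  Then
(i) for every `1 ≤ i ≤ p`, `(SG(T, i))* = SG(T*, i - 1)`; and (ii) `(SG(T, 0))* = T`. -/
theorem stmt_10 (T : PBT) (p : ℕ) (hp : T.size = p) (hp1 : 1 ≤ p) :
    (∀ i : ℕ, 1 ≤ i → i ≤ p → (T.SG i).star = T.star.SG (i - 1)) ∧
    (T.SG 0).star = T := by
  subst hp
  refine ⟨fun i h1 h2 => PBT.star_SG T i h1 h2, ?_⟩
  rw [PBT.SG, PBT.splice_zero]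
  rfl
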